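/- Let F = ⟨A, R, W, S⟩ be a semiring-based weighted argumentation framework over an absorptive c-semiring S, let Z ⊆ A be a w-admissible extension of F, and let B = A \ (Z ∪ R⁺(Z)). If T ⊆ B is a w-preferred extension of the restricted framework F|_B and every argument of T is w-defended by Z ∪ T in F, then Z ∪ T is a w-preferred extension of F. -/
import Mathlib


open Finset

variable {A : Type*} [Fintype A] [DecidableEq A] {S : Type*} [CommSemiring S]

/-- The order induced by the idempotent addition of a c-semiring: `a ≤ₛ b` iff `a + b = b`. -/
def sLE (a b : S) : Prop := a + b = b

/-- The attack weight `W(B, D)` from a set of arguments `B` to a set `D`: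
the semiring product of all pairwise weights. -/
def Wsets (W : A → A → S) (B D : Finset A) : S := ∏ b ∈ B, ∏ d ∈ D, W b d

/-- `B` is w-conflict-free iff `W(B, B) = ⊤` (here `⊤` is the multiplicative unit `1`). -/
def wConflictFree (W : A → A → S) (B : Finset A) : Prop := Wsets W B B = 1

/-- Within the framework whose set of arguments is `U`, the set `B` w-defends `b`:
for every attacker `a ∈ U` of `b` (i.e. `W a b ≠ ⊤`), `W(a, B ∪ {b}) ≥ₛ W(B, a)`. -/
def wDefendsIn (W : A → A → S) (U B : Finset A) (b : A) : Prop :=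
  ∀ a ∈ U, W a b ≠ 1 → sLE (Wsets W B {a}) (Wsets W {a} (insert b B))

/-- `B` is w-admissible in the framework with argument set `U`:
`B ⊆ U`, `B` is w-conflict-free, and `B` w-defends each of its members. -/
def wAdmissibleIn (W : A → A → S) (U B : Finset A) : Prop :=
  B ⊆ U ∧ wConflictFree W B ∧ ∀ b ∈ B, wDefendsIn W U B b

/-- `B` is a w-stable extension: w-admissible and every argument of `U` outside `B`
is attacked by some member of `B`. -/
def wStableIn (W : A → A → S) (U B : Finset A) : Prop :=
  wAdmissibleIn W U B ∧ ∀ a ∈ U, a ∉ B → ∃ b ∈ B, W b a ≠ 1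

/-- `B` is a w-complete extension: w-admissible and it contains every argument `b`
such that `B ∪ {b}` is w-admissible. -/
def wCompleteIn (W : A → A → S) (U B : Finset A) : Prop :=
  wAdmissibleIn W U B ∧ ∀ b ∈ U, wAdmissibleIn W U (insert b B) → b ∈ B

/-- `B` is a w-preferred extension: a ⊆-maximal w-admissible subset. -/
def wPreferredIn (W : A → A → S) (U B : Finset A) : Prop :=
  wAdmissibleIn W U B ∧ ∀ C : Finset A, wAdmissibleIn W U C → B ⊆ C → C = B

/-! ### Auxiliary lemmas -/

lemma sle_trans {a b c : S} (h1 : sLE a b) (h2 : sLE b c) : sLE a c := by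
  unfold sLE at *
  rw [← h2, ← add_assoc, h1]

/-- Everything is ≤ 1 in an absorptive semiring. -/
lemma sle_top (habs : ∀ s t : S, s + s * t = s) (x : S) : sLE x 1 := by
  have := habs 1 x
  rw [one_mul] at this
  show x + 1 = 1
  rw [add_comm]; exact this

/-- Products absorb downward: `x * y ≤ x`. -/
lemma sle_mul_left (habs : ∀ s t : S, s + s * t = s) (x y : S) : sLE (x * y) x := by
  show x * y + x = x
  rw [add_comm]; exact habs x y

/-- Products absorb downward: `x * y ≤ y`. -/
lemma sle_mul_right (habs : ∀ s t : S, s + s * t = s) (x y : S) : sLE (x * y) y := by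
  rw [mul_comm]; exact sle_mul_left habs y x

/-- In an absorptive semiring every unit equals 1. -/
lemma unit_eq_one (habs : ∀ s t : S, s + s * t = s) {u v : S} (h : u * v = 1) : u = 1 := by
  have h1 : (1 : S) + u = 1 := by
    have := habs 1 u; rwa [one_mul] at this
  have h2 : (1 : S) + u = u := by
    have := habs u v
    rw [add_comm] at this
    rw [← h]; exact this
  rw [← h2, h1]

/-- If a finite product equals 1 then each factor equals 1. -/
lemma prod_factor_one (habs : ∀ s t : S, s + s * t = s) {ι : Type*} [DecidableEq ι]
    {s : Finset ι} {f : ι → S} (h : ∏ i ∈ s, f i = 1) : ∀ i ∈ s, f i = 1 := by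
  intro i hi
  exact unit_eq_one habs ((Finset.mul_prod_erase s f hi).trans h)

lemma Wsets_one {W : A → A → S} {X D : Finset A}
    (h : ∀ x ∈ X, ∀ d ∈ D, W x d = 1) : Wsets W X D = 1 :=
  Finset.prod_eq_one fun x hx => Finset.prod_eq_one fun d hd => h x hx d hd

/-- If a set is conflict-free then all pairwise weights within it are 1. -/
lemma Wsets_all_one (habs : ∀ s t : S, s + s * t = s) {W : A → A → S} {X : Finset A}
    (h : Wsets W X X = 1) : ∀ x ∈ X, ∀ y ∈ X, W x y = 1 := by
  intro x hx y hy
  have h1 : ∏ d ∈ X, W x d = 1 := prod_factor_one habs h x hx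
  exact prod_factor_one habs h1 y hy

lemma Wsets_union_left {W : A → A → S} {X Y : Finset A} (D : Finset A) (h : Disjoint X Y) :
    Wsets W (X ∪ Y) D = Wsets W X D * Wsets W Y D :=
  Finset.prod_union h

lemma Wsets_union_right {W : A → A → S} (X : Finset A) {D E : Finset A} (h : Disjoint D E) :
    Wsets W X (D ∪ E) = Wsets W X D * Wsets W X E := by
  unfold Wsets
  rw [← Finset.prod_mul_distrib]
  exact Finset.prod_congr rfl fun x _ => Finset.prod_union h

lemma Wsets_single_left_one (habs : ∀ s t : S, s + s * t = s) {W : A → A → S} {a : A}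
    {D : Finset A} (h : Wsets W {a} D = 1) : ∀ d ∈ D, W a d = 1 := by
  have h' : ∏ d ∈ D, W a d = 1 := by
    have : Wsets W {a} D = ∏ d ∈ D, W a d := by simp [Wsets]
    rwa [this] at h
  exact prod_factor_one habs h'

/-- Division/union theorem: if Z is w-admissible in F, B = A \ (Z ∪ R⁺(Z)) is the
remaining sub-framework's argument set, T ⊆ B is a w-preferred extension of F|_B, and
every argument of T is w-defended by Z ∪ T in F, then Z ∪ T is a w-preferred extension
of F.  (Here a ∈ B iff a ∉ Z and no member of Z attacks a, i.e. W(i,a) = ⊤ for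
all i ∈ Z.) -/
theorem union_preferred (W : A → A → S)
    (hadd : ∀ s : S, s + s = s) (habs : ∀ s t : S, s + s * t = s)
    (Z : Finset A) (hZ : wAdmissibleIn W Finset.univ Z)
    (B : Finset A) (hB : ∀ a : A, a ∈ B ↔ a ∉ Z ∧ ∀ i ∈ Z, W i a = 1)
    (T : Finset A) (hT : T ⊆ B)
    (hTB : wPreferredIn W B T)
    (hdef : ∀ t ∈ T, wDefendsIn W Finset.univ (Z ∪ T) t) :
    wPreferredIn W Finset.univ (Z ∪ T) := by
  have hZB_disj : ∀ x ∈ B, x ∉ Z := fun x hx => ((hB x).mp hx).1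
  have hZT : Disjoint Z T :=
    Finset.disjoint_left.mpr fun {x} hxZ hxT => hZB_disj x (hT hxT) hxZ
  have hZall : ∀ x ∈ Z, ∀ y ∈ Z, W x y = 1 := Wsets_all_one habs hZ.2.1
  have hTall : ∀ x ∈ T, ∀ y ∈ T, W x y = 1 := Wsets_all_one habs hTB.1.2.1
  have hZTone : ∀ i ∈ Z, ∀ t ∈ T, W i t = 1 := fun i hi t ht => ((hB t).mp (hT ht)).2 i hi
  -- T does not (effectively) attack Z
  have hTZone : ∀ t ∈ T, ∀ i ∈ Z, W t i = 1 := by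
    intro t ht i hi
    by_contra hne
    have hdefi := hZ.2.2 i hi t (Finset.mem_univ t) hne
    have h1 : Wsets W Z {t} = 1 := Wsets_one fun z hz d hd => by
      rw [Finset.mem_singleton.mp hd]; exact hZTone z hz t ht
    rw [h1] at hdefi
    -- hdefi : sLE 1 X;  also X ≤ 1, hence X = 1
    have hX1 : Wsets W {t} (insert i Z) = 1 := by
      have h2 : sLE (Wsets W {t} (insert i Z)) 1 := sle_top habs _
      calc Wsets W {t} (insert i Z)
          = 1 + Wsets W {t} (insert i Z) := hdefi.symm
        _ = Wsets W {t} (insert i Z) + 1 := add_comm _ _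
        _ = 1 := h2
    exact hne (Wsets_single_left_one habs hX1 i (Finset.mem_insert_self i Z))
  have hall : ∀ x ∈ Z ∪ T, ∀ y ∈ Z ∪ T, W x y = 1 := by
    intro x hx y hy
    rcases Finset.mem_union.mp hx with hx | hx <;> rcases Finset.mem_union.mp hy with hy | hy
    · exact hZall x hx y hy
    · exact hZTone x hx y hy
    · exact hTZone x hx y hy
    · exact hTall x hx y hy
  -- admissibility of Z ∪ T
  have hadm : wAdmissibleIn W Finset.univ (Z ∪ T) := by
    refine ⟨Finset.subset_univ _, Wsets_one hall, ?_⟩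
    intro b hb
    rcases Finset.mem_union.mp hb with hbZ | hbT
    · -- b ∈ Z
      intro a _ ha
      by_cases hat : ∃ t ∈ T, W a t ≠ 1
      · obtain ⟨t, ht, hat⟩ := hat
        have := hdef t ht a (Finset.mem_univ a) hat
        rw [Finset.insert_eq_self.mpr (Finset.mem_union_right Z ht)] at this
        rwa [Finset.insert_eq_self.mpr (Finset.mem_union_left T hbZ)]
      · push_neg at hat
        rw [Finset.insert_eq_self.mpr (Finset.mem_union_left T hbZ),
          Wsets_union_left {a} hZT, Wsets_union_right {a} hZT]
        have hT1 : Wsets W {a} T = 1 := Wsets_one fun x hx d hd => by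
          rw [Finset.mem_singleton] at hx; subst hx; exact hat d hd
        rw [hT1, mul_one]
        have hZdef := hZ.2.2 b hbZ a (Finset.mem_univ a) ha
        rw [Finset.insert_eq_self.mpr hbZ] at hZdef
        exact sle_trans (sle_mul_left habs _ _) hZdef
    · exact hdef b hbT
  refine ⟨hadm, ?_⟩
  -- maximality
  intro C hC hsub
  have hCall : ∀ x ∈ C, ∀ y ∈ C, W x y = 1 := Wsets_all_one habs hC.2.1
  set C' : Finset A := C ∩ B with hC'def
  have hC'B : C' ⊆ B := Finset.inter_subset_right
  have hC'C : C' ⊆ C := Finset.inter_subset_left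
  have hZC : Z ⊆ C := (Finset.union_subset_iff.mp hsub).1
  have hZC' : Disjoint Z C' :=
    Finset.disjoint_left.mpr fun {x} hxZ hxC' => hZB_disj x (hC'B hxC') hxZ
  have hCeq : C = Z ∪ C' := by
    apply Finset.Subset.antisymm
    · intro x hx
      by_cases hxZ : x ∈ Z
      · exact Finset.mem_union_left _ hxZ
      · refine Finset.mem_union_right _ (Finset.mem_inter.mpr ⟨hx, (hB x).mpr ⟨hxZ, ?_⟩⟩)
        intro i hi
        exact hCall i (hZC hi) x hx
    · exact Finset.union_subset hZC hC'C
  have hC'adm : wAdmissibleIn W B C' := by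
    refine ⟨hC'B, Wsets_one fun x hx y hy => hCall x (hC'C hx) y (hC'C hy), ?_⟩
    intro c hc a haB hatt
    have hCdef := hC.2.2 c (hC'C hc) a (Finset.mem_univ a) hatt
    rw [Finset.insert_eq_self.mpr (hC'C hc)] at hCdef
    rw [Finset.insert_eq_self.mpr hc]
    have hZa : Wsets W Z {a} = 1 := Wsets_one fun z hz d hd => by
      rw [Finset.mem_singleton.mp hd]; exact ((hB a).mp haB).2 z hz
    rw [hCeq, Wsets_union_left {a} hZC', hZa, one_mul, Wsets_union_right {a} hZC'] at hCdef
    exact sle_trans hCdef (sle_mul_right habs _ _)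
  have hC'T : C' = T := hTB.2 C' hC'adm (Finset.subset_inter ((Finset.union_subset_iff.mp hsub).2) hT)
  rw [hCeq, hC'T]
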